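/- (Core of the finiteness of roots leaving the complementary stability region.) Suppose either m < n, or m = n with |k_G| ≠ 1. Then the set { ω ≥ 0 : H(ω) ≥ 0 and φ′(ω) > 0 } is bounded. (Since σ₀ < 0, the condition φ′(ω) > 0 corresponds to crossing direction −1, i.e. characteristic roots leaving the region Re(s) ≥ σ₀, and H(ω) ≥ 0 is the feasibility condition for a nonnegative delay; hence only frequencies in a bounded set can correspond to roots leaving the region for some delay h ∈ [0, ∞).) -/

import Mathlib

open Complex Real Filter Finset Set

lemma aux_ne (σ ω a b : ℝ) (h : a ≠ σ) :
    ((σ:ℂ) + (ω:ℂ)*Complex.I) - ((a:ℂ) + (b:ℂ)*Complex.I) ≠ 0 := by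
  intro heq
  apply h
  have := congrArg Complex.re heq
  simp at this
  linarith

lemma aux_log_abs (σ ω a b : ℝ) :
    Real.log (‖((σ:ℂ) + (ω:ℂ)*Complex.I) - ((a:ℂ) + (b:ℂ)*Complex.I)‖)
      = Real.log ((σ - a)^2 + (ω - b)^2) / 2 := by
  have h2 : (‖((σ:ℂ) + (ω:ℂ)*Complex.I) - ((a:ℂ) + (b:ℂ)*Complex.I)‖)^2
      = (σ - a)^2 + (ω - b)^2 := by
    rw [Complex.sq_norm, Complex.normSq_apply]
    simp
    ring
  rw [← h2, Real.log_pow]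
  push_cast
  ring

lemma aux_arctan_deriv (a c : ℝ) (hc : c ≠ 0) (ω : ℝ) :
    HasDerivAt (fun x => Real.arctan ((x - a)/c)) (c / (c^2 + (ω-a)^2)) ω := by
  have h1 : HasDerivAt (fun x : ℝ => (x - a)/c) (1/c) ω := by
    simpa using ((hasDerivAt_id ω).sub_const a).div_const c
  have h2 := (Real.hasDerivAt_arctan ((ω - a)/c)).comp ω h1
  refine h2.congr_deriv ?_
  have hpos : (0:ℝ) < c^2 + (ω-a)^2 := by positivity
  field_simp

lemma aux_log_deriv (a c : ℝ) (hc : c ≠ 0) (ω : ℝ) :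
    HasDerivAt (fun x => Real.log (c^2 + (x-a)^2) / 2) ((ω-a) / (c^2 + (ω-a)^2)) ω := by
  have hpos : (0:ℝ) < c^2 + (ω-a)^2 := by positivity
  have h1 : HasDerivAt (fun x : ℝ => c^2 + (x-a)^2) (2*(ω-a)) ω := by
    have := (((hasDerivAt_id ω).sub_const a).pow 2).const_add (c^2)
    simpa using this
  have h2 := (Real.hasDerivAt_log hpos.ne').comp ω h1
  have h3 := h2.div_const 2
  refine h3.congr_deriv ?_
  field_simp

lemma aux_tendsto_zero (a c : ℝ) :
    Tendsto (fun ω => c / (c^2 + (ω-a)^2)) atTop (nhds 0) := by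
  have hden : Tendsto (fun ω : ℝ => c^2 + (ω-a)^2) atTop atTop := by
    apply tendsto_atTop_add_const_left
    exact (tendsto_pow_atTop (two_ne_zero)).comp (tendsto_atTop_add_const_right _ (-a) tendsto_id)
  simpa using (tendsto_inv_atTop_zero.comp hden).const_mul c |>.congr
    (fun ω => by rw [div_eq_mul_inv]; rfl)

lemma aux_base (a c : ℝ) :
    Tendsto (fun ω : ℝ => c^2 * (ω⁻¹ * ω⁻¹) + (1 - a * ω⁻¹)^2) atTop (nhds 1) := by
  have hinv := tendsto_inv_atTop_zero (𝕜 := ℝ)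
  have h1 := ((hinv.mul hinv).const_mul (c^2)).add
    (((tendsto_const_nhds (x := (1:ℝ))).sub (hinv.const_mul a)).pow 2)
  simpa using h1

lemma aux_ratio (a c : ℝ) : Tendsto (fun ω : ℝ => (c^2 + (ω-a)^2)/ω^2) atTop (nhds 1) := by
  refine (aux_base a c).congr' ?_
  filter_upwards [eventually_gt_atTop 0] with ω hω
  have hne : ω ≠ 0 := hω.ne'
  field_simp

lemma aux_tendsto_one (a c : ℝ) (hc : c ≠ 0) :
    Tendsto (fun ω : ℝ => ω * ((ω-a) / (c^2 + (ω-a)^2))) atTop (nhds 1) := by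
  have hnum : Tendsto (fun ω : ℝ => 1 - a * ω⁻¹) atTop (nhds 1) := by
    simpa using (tendsto_const_nhds (x := (1:ℝ))).sub ((tendsto_inv_atTop_zero (𝕜 := ℝ)).const_mul a)
  have h := hnum.div (aux_base a c) one_ne_zero
  rw [div_one] at h
  refine h.congr' ?_
  filter_upwards [eventually_gt_atTop 0] with ω hω
  have hne : ω ≠ 0 := hω.ne'
  have hpos : (0:ℝ) < c^2 + (ω-a)^2 := by positivity
  simp only [Pi.div_apply]
  have e1 : 1 - a*ω⁻¹ = (ω-a)/ω := by field_simp
  have e2 : c^2*(ω⁻¹*ω⁻¹)+(1-a*ω⁻¹)^2 = (c^2+(ω-a)^2)/ω^2 := by field_simp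
  rw [e2, e1, div_div_div_comm]
  rw [div_div_eq_mul_div]
  field_simp

lemma aux_tendsto_logratio (a b c d : ℝ) (hc : c ≠ 0) (hd : d ≠ 0) :
    Tendsto (fun ω : ℝ => Real.log (c^2 + (ω-a)^2) / 2 - Real.log (d^2 + (ω-b)^2) / 2)
      atTop (nhds 0) := by
  have hratio : Tendsto (fun ω : ℝ => (c^2 + (ω-a)^2)/(d^2 + (ω-b)^2)) atTop (nhds 1) := by
    have h := (aux_ratio a c).div (aux_ratio b d) one_ne_zero
    rw [div_one] at h
    refine h.congr' ?_
    filter_upwards [eventually_gt_atTop 0] with ω hω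
    have hne : ω ≠ 0 := hω.ne'
    simp only [Pi.div_apply]
    rw [div_div_div_comm, div_self (pow_ne_zero 2 hne), div_one]
  have hlog : Tendsto (fun ω : ℝ => Real.log ((c^2 + (ω-a)^2)/(d^2 + (ω-b)^2))) atTop (nhds 0) := by
    have := (Real.continuousAt_log one_ne_zero).tendsto.comp hratio
    simpa [Function.comp_def] using this
  have h2 := hlog.div_const 2
  rw [zero_div] at h2
  refine h2.congr (fun ω => ?_)
  have h1 : (0:ℝ) < c^2 + (ω-a)^2 := by positivity
  have h3 : (0:ℝ) < d^2 + (ω-b)^2 := by positivity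
  rw [Real.log_div h1.ne' h3.ne', sub_div]

theorem stmt_18
    (m n : ℕ) (kG : ℝ) (hkG : kG ≠ 0)
    (σz ωz : Fin m → ℝ) (σp ωp : Fin n → ℝ)
    (σ0 : ℝ) (hσ0 : σ0 < 0)
    (hz : ∀ k, σz k ≠ σ0) (hp : ∀ i, σp i ≠ σ0)
    (G : ℂ → ℂ)
    (hG : ∀ s : ℂ, G s =
      (kG : ℂ) * (∏ k : Fin m, (s - ((σz k : ℂ) + (ωz k : ℂ) * Complex.I))) /
        (∏ i : Fin n, (s - ((σp i : ℂ) + (ωp i : ℂ) * Complex.I))))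
    (γz : Fin m → ℝ → ℝ)
    (hγz : ∀ (k : Fin m) (ω : ℝ), γz k ω = (σ0 - σz k) ^ 2 + (ω - ωz k) ^ 2)
    (γp : Fin n → ℝ → ℝ)
    (hγp : ∀ (i : Fin n) (ω : ℝ), γp i ω = (σ0 - σp i) ^ 2 + (ω - ωp i) ^ 2)
    (H : ℝ → ℝ)
    (hH : ∀ ω : ℝ, H ω = Real.log (‖G ((σ0 : ℂ) + (ω : ℂ) * Complex.I)‖) / σ0)
    (Θ : ℝ → ℝ)
    (hΘ : ∀ ω : ℝ, Θ ω =
      (∑ k : Fin m, Real.arctan ((ω - ωz k) / (σ0 - σz k)))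
        - ∑ i : Fin n, Real.arctan ((ω - ωp i) / (σ0 - σp i)))
    (φ : ℝ → ℝ) (hφ : ∀ ω : ℝ, φ ω = Θ ω - ω * H ω)
    (hcase : m < n ∨ (m = n ∧ |kG| ≠ 1))
    : Bornology.IsBounded {ω : ℝ | 0 ≤ ω ∧ 0 ≤ H ω ∧ 0 < deriv φ ω} := by
  have hσ0' : σ0 ≠ 0 := hσ0.ne
  have hzc : ∀ k : Fin m, σ0 - σz k ≠ 0 := fun k => sub_ne_zero.mpr (Ne.symm (hz k))
  have hpc : ∀ i : Fin n, σ0 - σp i ≠ 0 := fun i => sub_ne_zero.mpr (Ne.symm (hp i))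
  -- explicit formula for H
  have Hval : ∀ ω : ℝ, H ω = (Real.log |kG|
      + ((∑ k : Fin m, Real.log ((σ0 - σz k)^2 + (ω - ωz k)^2) / 2)
        - ∑ i : Fin n, Real.log ((σ0 - σp i)^2 + (ω - ωp i)^2) / 2)) / σ0 := by
    intro ω
    rw [hH, hG]
    have hznez : ∀ k : Fin m,
        ((σ0:ℂ) + (ω:ℂ)*Complex.I) - ((σz k : ℂ) + (ωz k : ℂ)*Complex.I) ≠ 0 :=
      fun k => aux_ne _ _ _ _ (hz k)
    have hpnez : ∀ i : Fin n,
        ((σ0:ℂ) + (ω:ℂ)*Complex.I) - ((σp i : ℂ) + (ωp i : ℂ)*Complex.I) ≠ 0 :=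
      fun i => aux_ne _ _ _ _ (hp i)
    rw [norm_div, norm_mul, norm_prod, norm_prod]
    rw [Real.log_div (by
          refine mul_ne_zero ?_ ?_
          · simpa using hkG
          · exact Finset.prod_ne_zero_iff.mpr fun k _ => (norm_ne_zero_iff.mpr (hznez k)))
        (Finset.prod_ne_zero_iff.mpr fun i _ => (norm_ne_zero_iff.mpr (hpnez i)))]
    rw [Real.log_mul (by simpa using hkG)
        (Finset.prod_ne_zero_iff.mpr fun k _ => (norm_ne_zero_iff.mpr (hznez k)))]
    rw [Real.log_prod (fun k _ => (norm_ne_zero_iff.mpr (hznez k))),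
        Real.log_prod (fun i _ => (norm_ne_zero_iff.mpr (hpnez i)))]
    simp only [aux_log_abs, Complex.norm_real, Real.norm_eq_abs]
    ring
  have HF : H = fun ω : ℝ => (Real.log |kG|
      + ((∑ k : Fin m, Real.log ((σ0 - σz k)^2 + (ω - ωz k)^2) / 2)
        - ∑ i : Fin n, Real.log ((σ0 - σp i)^2 + (ω - ωp i)^2) / 2)) / σ0 := funext Hval
  -- derivative of H
  set H' : ℝ → ℝ := fun ω =>
    ((∑ k : Fin m, (ω - ωz k) / ((σ0 - σz k)^2 + (ω - ωz k)^2))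
      - ∑ i : Fin n, (ω - ωp i) / ((σ0 - σp i)^2 + (ω - ωp i)^2)) / σ0 with hH'
  have Hderiv : ∀ ω : ℝ, HasDerivAt H (H' ω) ω := by
    intro ω
    rw [HF, hH']
    exact ((((HasDerivAt.fun_sum (fun k _ => aux_log_deriv (ωz k) (σ0 - σz k) (hzc k) ω)).sub
      (HasDerivAt.fun_sum (fun i _ => aux_log_deriv (ωp i) (σ0 - σp i) (hpc i) ω))).const_add
        (Real.log |kG|)).div_const σ0)
  -- derivative of Θ
  set Θ' : ℝ → ℝ := fun ω =>
    (∑ k : Fin m, (σ0 - σz k) / ((σ0 - σz k)^2 + (ω - ωz k)^2))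
      - ∑ i : Fin n, (σ0 - σp i) / ((σ0 - σp i)^2 + (ω - ωp i)^2) with hΘ'
  have Θderiv : ∀ ω : ℝ, HasDerivAt Θ (Θ' ω) ω := by
    intro ω
    rw [funext hΘ, hΘ']
    exact (HasDerivAt.fun_sum (fun k _ => aux_arctan_deriv (ωz k) (σ0 - σz k) (hzc k) ω)).sub
      (HasDerivAt.fun_sum (fun i _ => aux_arctan_deriv (ωp i) (σ0 - σp i) (hpc i) ω))
  -- derivative of φ
  have φderiv : ∀ ω : ℝ, deriv φ ω = Θ' ω - (H ω + ω * H' ω) := by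
    intro ω
    have h1 : HasDerivAt φ (Θ' ω - (1 * H ω + ω * H' ω)) ω := by
      rw [funext hφ]
      exact (Θderiv ω).sub ((hasDerivAt_id ω).mul (Hderiv ω))
    rw [h1.deriv]
    ring
  -- limit of Θ'
  have hΘ'lim : Tendsto Θ' atTop (nhds 0) := by
    have h1 : Tendsto (fun ω : ℝ => ∑ k : Fin m, (σ0 - σz k) / ((σ0 - σz k)^2 + (ω - ωz k)^2))
        atTop (nhds 0) := by
      have := tendsto_finset_sum (Finset.univ : Finset (Fin m))
        (fun k _ => aux_tendsto_zero (ωz k) (σ0 - σz k))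
      simpa using this
    have h2 : Tendsto (fun ω : ℝ => ∑ i : Fin n, (σ0 - σp i) / ((σ0 - σp i)^2 + (ω - ωp i)^2))
        atTop (nhds 0) := by
      have := tendsto_finset_sum (Finset.univ : Finset (Fin n))
        (fun i _ => aux_tendsto_zero (ωp i) (σ0 - σp i))
      simpa using this
    simpa [hΘ'] using h1.sub h2
  -- limit of ω * H' ω
  have hωH'lim : Tendsto (fun ω : ℝ => ω * H' ω) atTop (nhds (((m:ℝ) - n) / σ0)) := by
    have h1 : Tendsto (fun ω : ℝ => ∑ k : Fin m, ω * ((ω - ωz k) / ((σ0 - σz k)^2 + (ω - ωz k)^2)))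
        atTop (nhds (m:ℝ)) := by
      have := tendsto_finset_sum (Finset.univ : Finset (Fin m))
        (fun k _ => aux_tendsto_one (ωz k) (σ0 - σz k) (hzc k))
      simpa using this
    have h2 : Tendsto (fun ω : ℝ => ∑ i : Fin n, ω * ((ω - ωp i) / ((σ0 - σp i)^2 + (ω - ωp i)^2)))
        atTop (nhds (n:ℝ)) := by
      have := tendsto_finset_sum (Finset.univ : Finset (Fin n))
        (fun i _ => aux_tendsto_one (ωp i) (σ0 - σp i) (hpc i))
      simpa using this
    have h3 := (h1.sub h2).div_const σ0
    refine h3.congr (fun ω => ?_)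
    simp only [hH']
    rw [mul_div_assoc']
    congr 1
    rw [mul_sub, Finset.mul_sum, Finset.mul_sum]
  -- limit of deriv φ + H
  have hkey : Tendsto (fun ω : ℝ => deriv φ ω + H ω) atTop (nhds (((n:ℝ) - m) / σ0)) := by
    have h := hΘ'lim.sub hωH'lim
    have he : (0 : ℝ) - ((m:ℝ) - n) / σ0 = ((n:ℝ) - m) / σ0 := by ring
    rw [he] at h
    refine h.congr (fun ω => ?_)
    rw [φderiv ω]
    ring
  -- it suffices to kill membership eventually
  suffices hev : ∀ᶠ ω in atTop, ¬ (0 ≤ H ω ∧ 0 < deriv φ ω) by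
    obtain ⟨N, hN⟩ := eventually_atTop.mp hev
    refine (Metric.isBounded_Icc 0 N).subset ?_
    rintro ω ⟨h0, h1, h2⟩
    refine ⟨h0, ?_⟩
    by_contra hle
    exact hN ω (le_of_not_ge hle) ⟨h1, h2⟩
  rcases hcase with hmn | ⟨hmn, habs⟩
  · -- m < n : deriv φ + H → negative
    have hneg : ((n:ℝ) - m) / σ0 < 0 := by
      apply div_neg_of_pos_of_neg _ hσ0
      have : (m:ℝ) < n := by exact_mod_cast hmn
      linarith
    filter_upwards [Filter.Tendsto.eventually_lt_const hneg hkey] with ω h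
    rintro ⟨h1, h2⟩
    linarith
  · -- m = n, |kG| ≠ 1
    subst hmn
    have hHlim : Tendsto H atTop (nhds (Real.log |kG| / σ0)) := by
      have hsum : Tendsto (fun ω : ℝ =>
          ∑ k : Fin m, (Real.log ((σ0 - σz k)^2 + (ω - ωz k)^2) / 2
            - Real.log ((σ0 - σp k)^2 + (ω - ωp k)^2) / 2)) atTop (nhds 0) := by
        have := tendsto_finset_sum (Finset.univ : Finset (Fin m))
          (fun k _ => aux_tendsto_logratio (ωz k) (ωp k) (σ0 - σz k) (σ0 - σp k) (hzc k) (hpc k))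
        simpa using this
      have h4 := (hsum.const_add (Real.log |kG|)).div_const σ0
      rw [add_zero] at h4
      refine h4.congr (fun ω => ?_)
      rw [Hval ω, Finset.sum_sub_distrib]
    have hlkG : Real.log |kG| ≠ 0 := by
      intro h0
      rcases (Real.log_eq_zero).mp h0 with h | h | h
      · exact hkG (abs_eq_zero.mp h)
      · exact habs h
      · have := abs_nonneg kG; linarith
    rcases lt_or_gt_of_ne hlkG with hlt | hgt
    · -- log|kG| < 0 : H → positive c, deriv φ → -c < 0
      have hc : 0 < Real.log |kG| / σ0 := div_pos_of_neg_of_neg hlt hσ0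
      have hdlim : Tendsto (fun ω : ℝ => deriv φ ω) atTop (nhds (-(Real.log |kG| / σ0))) := by
        have h5 := hkey.sub hHlim
        have he : ((m:ℝ) - m) / σ0 - Real.log |kG| / σ0 = -(Real.log |kG| / σ0) := by ring
        rw [he] at h5
        refine h5.congr (fun ω => ?_)
        ring
      filter_upwards [Filter.Tendsto.eventually_lt_const (by linarith : -(Real.log |kG| / σ0) < 0) hdlim]
        with ω h
      rintro ⟨h1, h2⟩
      linarith
    · -- log|kG| > 0 : H → negative, eventually H < 0
      have hc : Real.log |kG| / σ0 < 0 := div_neg_of_pos_of_neg hgt hσ0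
      filter_upwards [Filter.Tendsto.eventually_lt_const hc hHlim] with ω h
      rintro ⟨h1, h2⟩
      linarith
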